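/- Let α ∈ (1/2, 1), κ > 0, and let φ : [0,∞) → [0,∞) be a bounded measurable integrable function such that lim_{t→∞} t^α ∫_t^∞ φ(s) ds = κ. Then for every real z > 0, lim_{T→∞} T^α ( ∫₀^∞ φ(s) ds − ∫₀^∞ e^{−z s / T} φ(s) ds ) = κ Γ(1−α) z^α, where Γ denotes the Gamma function. -/

import Mathlib

open MeasureTheory Filter Real
open Set

lemma exp_prim (lam t : ℝ) :
    ∫ x in (0:ℝ)..t, lam * Real.exp (-(lam * x)) = 1 - Real.exp (-(lam * t)) := by
  have h : ∀ x ∈ Set.uIcc (0:ℝ) t,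
      HasDerivAt (fun y => -Real.exp (-(lam * y))) (lam * Real.exp (-(lam * x))) x := by
    intro x _
    have h1 : HasDerivAt (fun y : ℝ => -(lam * y)) (-lam) x := by
      simpa using ((hasDerivAt_id x).const_mul lam).fun_neg
    have h2 := ((Real.hasDerivAt_exp (-(lam*x))).comp x h1).fun_neg
    exact h2.congr_deriv (by ring)
  rw [intervalIntegral.integral_eq_sub_of_hasDerivAt h
    ((Continuous.intervalIntegrable (by continuity) 0 t))]
  simp [Real.exp_zero]; ring

lemma key_identity (ψ : ℝ → ℝ) (hm : Measurable ψ) (hnn : ∀ t, 0 ≤ ψ t)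
    (hint : Integrable ψ) {lam : ℝ} (hlam : 0 < lam) :
    (∫ s in Ioi (0:ℝ), ψ s) - (∫ s in Ioi (0:ℝ), Real.exp (-(lam * s)) * ψ s)
      = ∫ u in Ioi (0:ℝ), (lam * Real.exp (-(lam * u))) * ∫ s in Ioi u, ψ s := by
  have hnnae : 0 ≤ᵐ[volume] ψ := Filter.Eventually.of_forall hnn
  set μ : Measure ℝ :=
    (volume.restrict (Ioi 0)).withDensity (fun s => ENNReal.ofReal (ψ s)) with hμdef
  have hd : Measurable (fun s => ENNReal.ofReal (ψ s)) := hm.ennreal_ofReal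
  have hid_nn : (0:ℝ → ℝ) ≤ᵐ[μ] id := by
    have : ∀ᵐ x ∂μ, (0:ℝ) ≤ x := by
      rw [hμdef, ae_withDensity_iff hd]
      filter_upwards [ae_restrict_mem measurableSet_Ioi] with x hx _
      exact le_of_lt hx
    exact this
  have hg_int : ∀ t > (0:ℝ), IntervalIntegrable (fun x => lam * Real.exp (-(lam * x))) volume 0 t :=
    fun t _ => Continuous.intervalIntegrable (by continuity) 0 t
  have hg_nn : ∀ᵐ t ∂volume.restrict (Ioi (0:ℝ)), 0 ≤ lam * Real.exp (-(lam * t)) :=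
    Filter.Eventually.of_forall (fun t => by positivity)
  have lc := lintegral_comp_eq_lintegral_meas_le_mul μ hid_nn measurable_id.aemeasurable hg_int hg_nn
  have lhs_eq : (∫⁻ ω, ENNReal.ofReal (∫ t in (0:ℝ)..(id ω), lam * Real.exp (-(lam * t))) ∂μ)
      = ∫⁻ s in Ioi (0:ℝ), ENNReal.ofReal ((1 - Real.exp (-(lam * s))) * ψ s) := by
    simp_rw [exp_prim, id]
    rw [hμdef, lintegral_withDensity_eq_lintegral_mul _ hd (by fun_prop)]
    refine setLIntegral_congr_fun measurableSet_Ioi (fun s hs => ?_)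
    simp only [Pi.mul_apply]
    rw [← ENNReal.ofReal_mul (hnn s)]
    ring_nf
  have meas_eq : ∀ t ∈ Ioi (0:ℝ), μ {a | t ≤ id a} = ENNReal.ofReal (∫ s in Ioi t, ψ s) := by
    intro t ht
    have h0 : {a : ℝ | t ≤ id a} = Ici t := rfl
    have h1 : Ici t ∩ Ioi (0:ℝ) = Ici t := by
      rw [inter_eq_left]; exact fun x hx => mem_Ioi.2 (lt_of_lt_of_le (mem_Ioi.1 ht) (mem_Ici.1 hx))
    rw [h0, hμdef, withDensity_apply _ measurableSet_Ici,
      Measure.restrict_restrict measurableSet_Ici, h1,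
      ofReal_integral_eq_lintegral_ofReal hint.integrableOn (ae_restrict_of_ae hnnae)]
    exact (setLIntegral_congr (Ioi_ae_eq_Ici (a := t))).symm
  have rhs_eq : (∫⁻ t in Ioi (0:ℝ), μ {a | t ≤ id a} * ENNReal.ofReal (lam * Real.exp (-(lam * t))))
      = ∫⁻ t in Ioi (0:ℝ), ENNReal.ofReal ((lam * Real.exp (-(lam * t))) * ∫ s in Ioi t, ψ s) := by
    refine setLIntegral_congr_fun measurableSet_Ioi (fun t ht => ?_)
    have hnnI : 0 ≤ ∫ s in Ioi t, ψ s := setIntegral_nonneg measurableSet_Ioi fun s _ => hnn s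
    rw [meas_eq t ht, ← ENNReal.ofReal_mul hnnI]
    congr 1; ring
  rw [lhs_eq, rhs_eq] at lc
  -- now convert to real integrals
  have hF_meas : Measurable (fun t : ℝ => ∫ s in Ioi t, ψ s) := by
    have : Antitone (fun t : ℝ => ∫ s in Ioi t, ψ s) := by
      intro a b hab
      exact setIntegral_mono_set hint.integrableOn (ae_restrict_of_ae hnnae)
        (HasSubset.Subset.eventuallyLE (Ioi_subset_Ioi hab))
    exact this.measurable
  have e1 : (∫ s in Ioi (0:ℝ), (1 - Real.exp (-(lam * s))) * ψ s)
      = (∫⁻ s in Ioi (0:ℝ), ENNReal.ofReal ((1 - Real.exp (-(lam * s))) * ψ s)).toReal := by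
    rw [integral_eq_lintegral_of_nonneg_ae]
    · filter_upwards [ae_restrict_mem measurableSet_Ioi] with s hs
      have h1 : Real.exp (-(lam * s)) ≤ 1 := by
        rw [Real.exp_le_one_iff]; nlinarith [le_of_lt (mem_Ioi.1 hs), hlam.le]
      have h2 := hnn s
      simp only [Pi.zero_apply]
      nlinarith
    · exact ((continuous_const.sub (by continuity : Continuous fun s : ℝ => Real.exp (-(lam*s)))).measurable.mul hm).aestronglyMeasurable
  have e2 : (∫ u in Ioi (0:ℝ), (lam * Real.exp (-(lam * u))) * ∫ s in Ioi u, ψ s)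
      = (∫⁻ u in Ioi (0:ℝ), ENNReal.ofReal ((lam * Real.exp (-(lam * u))) * ∫ s in Ioi u, ψ s)).toReal := by
    rw [integral_eq_lintegral_of_nonneg_ae]
    · filter_upwards [] with u
      have h3 : 0 ≤ ∫ s in Ioi u, ψ s := setIntegral_nonneg measurableSet_Ioi fun s _ => hnn s
      simp only [Pi.zero_apply]
      exact mul_nonneg (by positivity) h3
    · exact (((measurable_const.mul (by fun_prop : Measurable fun u : ℝ => Real.exp (-(lam*u))))).mul hF_meas).aestronglyMeasurable
  have hintexp : IntegrableOn (fun s => Real.exp (-(lam * s)) * ψ s) (Ioi (0:ℝ)) := by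
    refine Integrable.mono' hint.integrableOn
      (((by fun_prop : Measurable fun s : ℝ => Real.exp (-(lam*s))).mul hm).aestronglyMeasurable) ?_
    filter_upwards [ae_restrict_mem measurableSet_Ioi] with s hs
    have h1 : Real.exp (-(lam * s)) ≤ 1 := by
      rw [Real.exp_le_one_iff]; nlinarith [le_of_lt (mem_Ioi.1 hs), hlam.le]
    have h2 := hnn s
    rw [Real.norm_eq_abs, abs_of_nonneg (mul_nonneg (Real.exp_pos _).le h2)]
    nlinarith
  rw [← integral_sub hint.integrableOn hintexp] at *
  have : (∫ s in Ioi (0:ℝ), (ψ s - Real.exp (-(lam * s)) * ψ s))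
      = ∫ s in Ioi (0:ℝ), (1 - Real.exp (-(lam * s))) * ψ s := by
    refine setIntegral_congr_fun measurableSet_Ioi fun s _ => by ring
  rw [this, e1, e2, lc]
theorem laplace_tail_asymptotics
    (α κ : ℝ) (φ : ℝ → ℝ)
    (hα : α ∈ Set.Ioo (1 / 2 : ℝ) 1)
    (hκ : 0 < κ)
    (hφ_meas : Measurable φ)
    (hφ_nonneg : ∀ t : ℝ, 0 ≤ t → 0 ≤ φ t)
    (hφ_bdd : ∃ C : ℝ, ∀ t : ℝ, 0 ≤ t → φ t ≤ C)
    (hφ_int : IntegrableOn φ (Set.Ioi 0))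
    (htail : Tendsto (fun t : ℝ => t ^ α * ∫ s in Set.Ioi t, φ s) atTop (nhds κ)) :
    ∀ z : ℝ, 0 < z →
      Tendsto
        (fun T : ℝ => T ^ α *
          ((∫ s in Set.Ioi (0 : ℝ), φ s) -
            ∫ s in Set.Ioi (0 : ℝ), Real.exp (-z * s / T) * φ s))
        atTop (nhds (κ * Real.Gamma (1 - α) * z ^ α)) := by
  obtain ⟨hα1, hα2⟩ := hα
  have hα0 : (0:ℝ) < α := by linarith
  intro z hz
  set ψ : ℝ → ℝ := Set.indicator (Set.Ioi 0) φ with hψdef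
  have hψm : Measurable ψ := hφ_meas.indicator measurableSet_Ioi
  have hψnn : ∀ t, 0 ≤ ψ t := by
    intro t
    by_cases h : t ∈ Set.Ioi (0:ℝ)
    · rw [hψdef, Set.indicator_of_mem h]; exact hφ_nonneg t (le_of_lt h)
    · rw [hψdef, Set.indicator_of_notMem h]
  have hψint : Integrable ψ := (integrable_indicator_iff measurableSet_Ioi).2 hφ_int
  set F : ℝ → ℝ := fun t => ∫ s in Set.Ioi t, ψ s with hFdef
  have hψeqφ : ∀ t : ℝ, 0 ≤ t → F t = ∫ s in Set.Ioi t, φ s := by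
    intro t ht
    refine setIntegral_congr_fun measurableSet_Ioi fun s hs => ?_
    exact Set.indicator_of_mem (lt_of_le_of_lt ht hs) φ
  have hanti : Antitone F := fun a b hab => setIntegral_mono_set hψint.integrableOn
      (Filter.Eventually.of_forall hψnn) (HasSubset.Subset.eventuallyLE (Set.Ioi_subset_Ioi hab))
  have hFnn : ∀ t, 0 ≤ F t := fun t => setIntegral_nonneg measurableSet_Ioi fun s _ => hψnn s
  have hFmeas : Measurable F := hanti.measurable
  have htail' : Tendsto (fun t : ℝ => t ^ α * F t) atTop (nhds κ) := by
    refine htail.congr' ?_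
    filter_upwards [eventually_ge_atTop (0:ℝ)] with t ht
    rw [hψeqφ t ht]
  -- global bound
  obtain ⟨T₀, hT₀⟩ := eventually_atTop.1 (htail'.eventually (eventually_le_nhds (lt_add_one κ)))
  set T₁ : ℝ := max T₀ 1 with hT₁def
  set M : ℝ := max (κ + 1) (T₁ ^ α * F 0) with hMdef
  have hM : ∀ t : ℝ, 0 < t → t ^ α * F t ≤ M := by
    intro t ht
    rcases le_or_gt T₁ t with h | h
    · exact le_trans (hT₀ t (le_trans (le_max_left _ _) h)) (le_max_left _ _)
    · refine le_trans ?_ (le_max_right _ _)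
      have h1 : t ^ α ≤ T₁ ^ α := Real.rpow_le_rpow ht.le h.le hα0.le
      have h2 : F t ≤ F 0 := hanti ht.le
      have h3 : (0:ℝ) ≤ t ^ α := Real.rpow_nonneg ht.le _
      nlinarith [hFnn t, Real.rpow_nonneg (le_trans zero_le_one (le_max_right T₀ 1)) α]
  -- pointwise limit
  have hpt : ∀ v : ℝ, 0 < v →
      Tendsto (fun T : ℝ => T ^ α * F (T * v)) atTop (nhds (κ * v ^ (-α))) := by
    intro v hv
    have h1 : Tendsto (fun T : ℝ => (T * v) ^ α * F (T * v)) atTop (nhds κ) :=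
      htail'.comp (Tendsto.atTop_mul_const hv tendsto_id)
    have h2 := h1.const_mul (v ^ (-α))
    rw [mul_comm] at h2
    refine Tendsto.congr' ?_ h2
    filter_upwards [eventually_gt_atTop (0:ℝ)] with T hT
    have hvv : v ^ (-α) * v ^ α = 1 := by
      rw [← Real.rpow_add hv]; simp
    rw [Real.mul_rpow hT.le hv.le]
    calc v ^ (-α) * (T ^ α * v ^ α * F (T * v))
        = (v ^ (-α) * v ^ α) * (T ^ α * F (T * v)) := by ring
      _ = T ^ α * F (T * v) := by rw [hvv, one_mul]
  -- eventual equality of the two expressions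
  have heq : ∀ᶠ T in atTop,
      T ^ α * ((∫ s in Set.Ioi (0:ℝ), φ s) - ∫ s in Set.Ioi (0:ℝ), Real.exp (-z * s / T) * φ s)
        = ∫ v in Set.Ioi (0:ℝ), z * Real.exp (-(z * v)) * (T ^ α * F (T * v)) := by
    filter_upwards [eventually_gt_atTop (0:ℝ)] with T hT
    have hlam : (0:ℝ) < z / T := div_pos hz hT
    have e1 : (∫ s in Set.Ioi (0:ℝ), φ s) = ∫ s in Set.Ioi (0:ℝ), ψ s := (hψeqφ 0 le_rfl).symm
    have e2 : (∫ s in Set.Ioi (0:ℝ), Real.exp (-z * s / T) * φ s)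
        = ∫ s in Set.Ioi (0:ℝ), Real.exp (-((z/T) * s)) * ψ s := by
      refine setIntegral_congr_fun measurableSet_Ioi fun s hs => ?_
      rw [hψdef, Set.indicator_of_mem hs]
      congr 1
      rw [Real.exp_eq_exp]
      ring
    rw [e1, e2, key_identity ψ hψm hψnn hψint hlam]
    -- change of variables u = T * v
    have cov := integral_comp_mul_left_Ioi
      (fun u => (z/T) * Real.exp (-((z/T) * u)) * F u) 0 hT
    rw [mul_zero] at cov
    have hTne : T ≠ 0 := hT.ne'
    have e3 : (∫ u in Set.Ioi (0:ℝ), (z/T) * Real.exp (-((z/T) * u)) * F u)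
        = T * ∫ v in Set.Ioi (0:ℝ), (z/T) * Real.exp (-((z/T) * (T * v))) * F (T * v) := by
      rw [cov, smul_eq_mul, ← mul_assoc, mul_inv_cancel₀ hTne, one_mul]
    rw [e3]
    have e4 : (∫ v in Set.Ioi (0:ℝ), (z/T) * Real.exp (-((z/T) * (T * v))) * F (T * v))
        = (z/T) * ∫ v in Set.Ioi (0:ℝ), Real.exp (-(z * v)) * F (T * v) := by
      rw [← integral_const_mul]
      refine setIntegral_congr_fun measurableSet_Ioi fun v hv => ?_
      have : (z/T) * (T * v) = z * v := by field_simp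
      rw [this]; ring
    have e5 : (∫ v in Set.Ioi (0:ℝ), z * Real.exp (-(z * v)) * (T ^ α * F (T * v)))
        = (z * T ^ α) * ∫ v in Set.Ioi (0:ℝ), Real.exp (-(z * v)) * F (T * v) := by
      rw [← integral_const_mul]
      refine setIntegral_congr_fun measurableSet_Ioi fun v hv => ?_
      ring
    rw [e4, e5]
    field_simp
  -- dominated convergence
  have hbint : Integrable (fun v => z * Real.exp (-(z * v)) * (M * v ^ (-α)))
      (volume.restrict (Set.Ioi (0:ℝ))) := by
    have h6 := integrableOn_rpow_mul_exp_neg_mul_rpow (by linarith : (-1:ℝ) < -α) (p := 1) (by norm_num) hz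
    have h7 : IntegrableOn (fun v : ℝ => v ^ (-α) * Real.exp (-(z * v))) (Set.Ioi 0) := by
      refine h6.congr_fun (fun x hx => ?_) measurableSet_Ioi
      simp only [Real.rpow_one]; ring_nf
    refine (h7.const_mul (z * M)).congr ?_
    filter_upwards [] with v
    ring
  have hlim : Tendsto (fun T : ℝ => ∫ v in Set.Ioi (0:ℝ),
        z * Real.exp (-(z * v)) * (T ^ α * F (T * v))) atTop
      (nhds (∫ v in Set.Ioi (0:ℝ), z * Real.exp (-(z * v)) * (κ * v ^ (-α)))) := by
    refine tendsto_integral_filter_of_dominated_convergence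
      (fun v => z * Real.exp (-(z * v)) * (M * v ^ (-α))) ?_ ?_ hbint ?_
    · filter_upwards [] with T
      exact (((measurable_const.mul (by fun_prop : Measurable fun v : ℝ => Real.exp (-(z*v))))).mul
        ((hFmeas.comp (measurable_id.const_mul T)).const_mul (T ^ α))).aestronglyMeasurable
    · filter_upwards [eventually_ge_atTop (1:ℝ)] with T hT
      filter_upwards [ae_restrict_mem measurableSet_Ioi] with v hv
      have hT0 : (0:ℝ) < T := lt_of_lt_of_le one_pos hT
      have hTv : 0 < T * v := mul_pos hT0 hv
      have hvv : v ^ (-α) * v ^ α = 1 := by rw [← Real.rpow_add hv]; simp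
      have h5 : T ^ α * F (T * v) = v ^ (-α) * ((T * v) ^ α * F (T * v)) := by
        rw [Real.mul_rpow hT0.le (le_of_lt hv)]
        have : v ^ (-α) * (T ^ α * v ^ α * F (T * v))
            = (v ^ (-α) * v ^ α) * (T ^ α * F (T * v)) := by ring
        rw [this, hvv, one_mul]
      have hkey : T ^ α * F (T * v) ≤ M * v ^ (-α) := by
        rw [h5, mul_comm M _]
        exact mul_le_mul_of_nonneg_left (hM _ hTv) (Real.rpow_nonneg (le_of_lt hv) _)
      have hnn1 : 0 ≤ z * Real.exp (-(z * v)) * (T ^ α * F (T * v)) := by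
        have := hFnn (T * v)
        have h9 : (0:ℝ) ≤ T ^ α := Real.rpow_nonneg hT0.le _
        positivity
      rw [Real.norm_eq_abs, abs_of_nonneg hnn1]
      exact mul_le_mul_of_nonneg_left hkey (by positivity)
    · filter_upwards [ae_restrict_mem measurableSet_Ioi] with v hv
      exact (hpt v hv).const_mul (z * Real.exp (-(z * v)))
  -- value of limit
  have hval : (∫ v in Set.Ioi (0:ℝ), z * Real.exp (-(z * v)) * (κ * v ^ (-α)))
      = κ * Real.Gamma (1 - α) * z ^ α := by
    have h8 : (∫ v : ℝ in Set.Ioi 0, v ^ ((1 - α) - 1) * Real.exp (-(z * v)))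
        = (1/z) ^ (1-α) * Real.Gamma (1-α) :=
      integral_rpow_mul_exp_neg_mul_Ioi (by linarith) hz
    have h9 : (∫ v in Set.Ioi (0:ℝ), z * Real.exp (-(z * v)) * (κ * v ^ (-α)))
        = (z * κ) * ∫ v : ℝ in Set.Ioi 0, v ^ ((1 - α) - 1) * Real.exp (-(z * v)) := by
      rw [← integral_const_mul]
      refine setIntegral_congr_fun measurableSet_Ioi fun v hv => ?_
      have : (1 - α) - 1 = -α := by ring
      rw [this]; ring
    rw [h9, h8]
    have h10 : (1/z) ^ (1-α) = z ^ (α - 1) := by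
      rw [one_div, Real.inv_rpow hz.le, ← Real.rpow_neg hz.le]
      congr 1; ring
    rw [h10]
    have h11 : z * z ^ (α - 1) = z ^ α := by
      nth_rewrite 1 [← Real.rpow_one z]
      rw [← Real.rpow_add hz]; norm_num
    calc (z * κ) * (z ^ (α-1) * Real.Gamma (1-α))
        = κ * Real.Gamma (1-α) * (z * z ^ (α-1)) := by ring
      _ = κ * Real.Gamma (1-α) * z ^ α := by rw [h11]
  rw [hval] at hlim
  exact Tendsto.congr' (by filter_upwards [heq] with T h; exact h.symm) hlim
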